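/- Let θ ∈ ℂ with |θ| = 1, θ ≠ 1, and θ ≠ -1, and let u be the n×n complex matrix with u k l = (if k = l then 1 else 0) + (θ - 1)/n. Then u is unitary (u * uᴴ = 1) and every entry of u is nonzero. -/

import Mathlib

open Finset Matrix

/-- for `|θ| = 1`, `θ ≠ ±1`, the matrix `u k l = δ_{kl} + (θ - 1)/n` is unitary
and has nonzero entries. -/
theorem stmt14 (n : ℕ) (hn : 1 ≤ n) (θ : ℂ)
    (hθ : ‖θ‖ = 1) (hθ1 : θ ≠ 1) (hθ2 : θ ≠ -1)
    (u : Matrix (Fin n) (Fin n) ℂ)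
    (hu : ∀ k l, u k l = (if k = l then 1 else 0) + (θ - 1) / (n : ℂ)) :
    u * uᴴ = 1 ∧ ∀ k l, u k l ≠ 0 := by
  have hn0 : (n : ℂ) ≠ 0 := Nat.cast_ne_zero.mpr (by omega)
  have hts : θ * (starRingEnd ℂ) θ = 1 := by
    rw [Complex.mul_conj]
    norm_cast
    rw [Complex.normSq_eq_norm_sq, hθ]; norm_num
  constructor
  · ext k l
    simp only [mul_apply, conjTranspose_apply, hu, one_apply]
    have hconj : ∀ j : Fin n, star ((if l = j then 1 else 0) + (θ - 1) / (n : ℂ))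
        = (if l = j then 1 else 0) + ((starRingEnd ℂ) θ - 1) / (n : ℂ) := by
      intro j
      simp [star_add, star_div₀, star_sub, apply_ite (star : ℂ → ℂ), Complex.star_def]
    simp only [hconj]
    have hexp : ∀ j : Fin n,
        ((if k = j then 1 else 0) + (θ - 1) / (n : ℂ)) *
          ((if l = j then 1 else 0) + ((starRingEnd ℂ) θ - 1) / (n : ℂ))
        = (if k = j then (1:ℂ) else 0) * (if l = j then 1 else 0)
          + (if k = j then 1 else 0) * (((starRingEnd ℂ) θ - 1) / (n : ℂ))
          + (if l = j then 1 else 0) * ((θ - 1) / (n : ℂ))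
          + ((θ - 1) / (n : ℂ)) * (((starRingEnd ℂ) θ - 1) / (n : ℂ)) := by
      intro j; ring
    simp only [hexp, Finset.sum_add_distrib, Finset.sum_const, Finset.card_univ,
      Fintype.card_fin, nsmul_eq_mul]
    have hkl : (∑ j : Fin n, (if k = j then (1:ℂ) else 0) * (if l = j then 1 else 0))
        = if k = l then 1 else 0 := by
      simp [ite_mul, one_mul, zero_mul, Finset.sum_ite_eq]
    have s2 : (∑ j : Fin n, (if k = j then (1:ℂ) else 0) * (((starRingEnd ℂ) θ - 1) / (n : ℂ)))
        = ((starRingEnd ℂ) θ - 1) / (n : ℂ) := by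
      simp [ite_mul, one_mul, zero_mul, Finset.sum_ite_eq]
    have s3 : (∑ j : Fin n, (if l = j then (1:ℂ) else 0) * ((θ - 1) / (n : ℂ)))
        = (θ - 1) / (n : ℂ) := by
      simp [ite_mul, one_mul, zero_mul, Finset.sum_ite_eq]
    rw [hkl, s2, s3]
    have key : ((starRingEnd ℂ) θ - 1) / (n : ℂ) + (θ - 1) / (n : ℂ)
        + (n : ℂ) * ((θ - 1) / (n : ℂ) * (((starRingEnd ℂ) θ - 1) / (n : ℂ))) = 0 := by
      have hinv : (n : ℂ) * (n : ℂ)⁻¹ = 1 := mul_inv_cancel₀ hn0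
      simp only [div_eq_mul_inv]
      linear_combination (n : ℂ)⁻¹ * hts
        + (n : ℂ)⁻¹ * (θ - 1) * ((starRingEnd ℂ) θ - 1) * hinv
    linear_combination key
  · intro k l
    rw [hu]
    by_cases h : k = l
    · simp only [h, if_pos rfl, ite_true]
      intro habs
      have : θ = 1 - (n : ℂ) := by
        field_simp at habs
        linear_combination habs
      rw [this] at hθ
      have h2 : ‖(1 - (n : ℂ))‖ = (n : ℝ) - 1 := by
        rw [show (1 - (n:ℂ)) = ((1 - (n:ℝ) : ℝ) : ℂ) by push_cast; ring,
          Complex.norm_real, Real.norm_eq_abs, abs_of_nonpos (by linarith [show (1:ℝ) ≤ (n:ℝ) from by exact_mod_cast hn])]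
        ring
      rw [h2] at hθ
      have hn2 : n = 2 := by
        have : (n : ℝ) = 2 := by linarith
        exact_mod_cast this
      rw [this] at hθ2
      apply hθ2
      rw [hn2]; norm_num
    · simp only [if_neg h, zero_add]
      exact div_ne_zero (sub_ne_zero.mpr hθ1) hn0
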